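/- Let A be a real 2×2 matrix, symmetric-part condition: suppose A₀₀ + A₁₁ ≠ 0 and set q = (A₀₁ − A₁₀)/(A₀₀ + A₁₁) and Q = [[0, q], [−q, 0]]. If A is invertible, then the matrix C = −(I + Q)·A⁻¹ is symmetric and satisfies xᵀ C A x = −xᵀx for all x ∈ ℝ². -/

import Mathlib

open Matrix

/-- With q = (A₀₁ − A₁₀)/(A₀₀ + A₁₁) and Q the corresponding antisymmetric
matrix, C = −(I + Q)A⁻¹ is symmetric and satisfies xᵀCAx = −xᵀx for all x ∈ ℝ². -/
theorem audic_matrix_construction (A : Matrix (Fin 2) (Fin 2) ℝ)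
    (htr : A 0 0 + A 1 1 ≠ 0)
    (q : ℝ) (hq : q = (A 0 1 - A 1 0) / (A 0 0 + A 1 1))
    (Q : Matrix (Fin 2) (Fin 2) ℝ) (hQ : Q = !![0, q; -q, 0])
    (hinv : IsUnit A.det)
    (C : Matrix (Fin 2) (Fin 2) ℝ) (hC : C = -((1 + Q) * A⁻¹)) :
    C.IsSymm ∧ ∀ x : Fin 2 → ℝ, x ⬝ᵥ (C *ᵥ (A *ᵥ x)) = -(x ⬝ᵥ x) := by
  have hdet : A.det ≠ 0 := hinv.ne_zero
  have hCA : C * A = -(1 + Q) := by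
    rw [hC, neg_mul, Matrix.mul_assoc, Matrix.nonsing_inv_mul A hinv, Matrix.mul_one]
  constructor
  · -- symmetry
    have hAinv : A⁻¹ = A.det⁻¹ • !![A 1 1, -(A 0 1); -(A 1 0), A 0 0] := by
      rw [Matrix.inv_def, Ring.inverse_eq_inv']
      congr 1
      rw [show A = !![A 0 0, A 0 1; A 1 0, A 1 1] from Matrix.etaExpand_eq A ▸ rfl]
      simp [Matrix.adjugate_fin_two]
    have hdet2 : A.det = A 0 0 * A 1 1 - A 0 1 * A 1 0 := Matrix.det_fin_two A
    rw [Matrix.IsSymm, ← Matrix.ext_iff]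
    intro i j
    fin_cases i <;> fin_cases j <;>
      simp [hC, hAinv, hQ, Matrix.mul_apply, Fin.sum_univ_two, Matrix.one_apply,
        Matrix.transpose_apply] <;>
    · subst hq
      field_simp [hdet]
      ring
  · intro x
    have : C *ᵥ (A *ᵥ x) = (C * A) *ᵥ x := Matrix.mulVec_mulVec x C A
    rw [this, hCA, hQ]
    simp [Matrix.mulVec, dotProduct, Fin.sum_univ_two, Matrix.one_apply, Matrix.vecHead, Matrix.vecTail]
    ring
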